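/- Let κ > 0, δ > 0, γ ≥ 0 and T > 0. Suppose y : [0,T] → ℝ is continuous, nonnegative, differentiable on (0,T), and satisfies y'(t) ≤ −κ y(t)^{2+δ} + γ y(t) for all t ∈ (0,T). Then y(t) ≤ e^{γ t} (κ (1+δ) t)^{−1/(1+δ)} for every t ∈ (0,T]. -/

import Mathlib

open Set Real

/-- If `y ≥ 0` is continuous on `[0,T]`, differentiable on `(0,T)` and
satisfies `y' ≤ −κ y^{2+δ} + γ y` there, then `y(t) ≤ e^{γt} (κ(1+δ)t)^{−1/(1+δ)}`
on `(0,T]`. -/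
theorem stmt4 (κ δ γ T : ℝ) (hκ : 0 < κ) (hδ : 0 < δ) (hγ : 0 ≤ γ) (hT : 0 < T)
    (y y' : ℝ → ℝ)
    (hcont : ContinuousOn y (Set.Icc 0 T))
    (hnonneg : ∀ t ∈ Set.Icc 0 T, 0 ≤ y t)
    (hderiv : ∀ t ∈ Set.Ioo 0 T, HasDerivAt y (y' t) t)
    (hineq : ∀ t ∈ Set.Ioo 0 T, y' t ≤ -κ * y t ^ (2 + δ) + γ * y t) :
    ∀ t ∈ Set.Ioc 0 T, y t ≤ Real.exp (γ * t) * (κ * (1 + δ) * t) ^ (-(1 + δ)⁻¹) := by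
  intro t ht
  obtain ⟨ht0, htT⟩ := ht
  set z : ℝ → ℝ := fun s => Real.exp (-γ * s) * y s with hzdef
  set z' : ℝ → ℝ := fun s => (-γ) * Real.exp (-γ * s) * y s + Real.exp (-γ * s) * y' s
    with hz'def
  have hzderiv : ∀ s ∈ Set.Ioo 0 T, HasDerivAt z (z' s) s := by
    intro s hs
    have h1 : HasDerivAt (fun u : ℝ => Real.exp (-γ * u)) ((-γ) * Real.exp (-γ * s)) s := by
      have := (Real.hasDerivAt_exp (-γ * s)).comp s ((hasDerivAt_id s).const_mul (-γ))
      simpa [Function.comp_def, mul_comm] using this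
    have h2 : HasDerivAt (fun u => Real.exp (-γ * u) * y u) _ s := h1.mul (hderiv s hs)
    rw [hzdef, hz'def]
    convert h2 using 1
  have hznn : ∀ s ∈ Set.Icc 0 T, 0 ≤ z s := fun s hs =>
    mul_nonneg (Real.exp_pos _).le (hnonneg s hs)
  have hzineq : ∀ s ∈ Set.Ioo 0 T, z' s ≤ -κ * z s ^ (2 + δ) := by
    intro s hs
    have hy := hnonneg s (Set.mem_Icc.2 ⟨hs.1.le, hs.2.le⟩)
    have h1 : z' s ≤ Real.exp (-γ * s) * (-κ * y s ^ (2 + δ)) := by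
      have h2 := hineq s hs
      have h3 := mul_le_mul_of_nonneg_left h2 (Real.exp_pos (-γ * s)).le
      simp only [hz'def]
      nlinarith [Real.exp_pos (-γ * s)]
    refine h1.trans ?_
    have hzpow : z s ^ (2 + δ) = Real.exp (-γ * s) ^ (2 + δ) * y s ^ (2 + δ) :=
      Real.mul_rpow (Real.exp_pos _).le hy
    have hexp : Real.exp (-γ * s) ^ (2 + δ) ≤ Real.exp (-γ * s) := by
      rw [← Real.exp_log (Real.exp_pos (-γ * s)), Real.log_exp, ← Real.exp_mul]
      apply Real.exp_le_exp.2
      nlinarith [mul_nonneg hγ hs.1.le, hδ]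
    have hypow : 0 ≤ y s ^ (2 + δ) := Real.rpow_nonneg hy _
    simp only [hzdef, hzpow]
    nlinarith [mul_le_mul_of_nonneg_left hexp (mul_nonneg hκ.le hypow)]
  -- z is antitone on [0,T]
  have hzcont : ContinuousOn z (Set.Icc 0 T) :=
    (Real.continuous_exp.comp (continuous_const.mul continuous_id)).continuousOn.mul hcont
  have hzanti : AntitoneOn z (Set.Icc 0 T) := by
    apply antitoneOn_of_deriv_nonpos (convex_Icc 0 T) hzcont
    · intro x hx
      rw [interior_Icc] at hx
      exact ((hzderiv x hx).differentiableAt).differentiableWithinAt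
    · intro x hx
      rw [interior_Icc] at hx
      rw [(hzderiv x hx).deriv]
      have := hzineq x hx
      have hzx := hznn x (Set.mem_Icc.2 ⟨hx.1.le, hx.2.le⟩)
      have : -κ * z x ^ (2 + δ) ≤ 0 := by
        have := Real.rpow_nonneg hzx (2 + δ)
        nlinarith
      linarith [hzineq x hx]
  -- main case split
  rcases eq_or_lt_of_le (hnonneg t (Set.mem_Icc.2 ⟨ht0.le, htT⟩)) with hy0 | hy0
  · rw [← hy0]
    positivity
  have hzt : 0 < z t := mul_pos (Real.exp_pos _) hy0
  have hzpos : ∀ s ∈ Set.Icc 0 t, 0 < z s := by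
    intro s hs
    have hs' : s ∈ Set.Icc 0 T := ⟨hs.1, hs.2.trans htT⟩
    exact hzt.trans_le (hzanti hs' ⟨ht0.le, htT⟩ hs.2)
  set p : ℝ := -(1 + δ) with hp
  set g : ℝ → ℝ := fun s => z s ^ p - κ * (1 + δ) * s with hg
  have hgmono : MonotoneOn g (Set.Icc 0 t) := by
    have hIcc : Set.Icc 0 t ⊆ Set.Icc 0 T := Set.Icc_subset_Icc le_rfl htT
    have hIoo : Set.Ioo 0 t ⊆ Set.Ioo 0 T := Set.Ioo_subset_Ioo le_rfl htT
    have hgd : ∀ x ∈ Set.Ioo 0 t,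
        HasDerivAt g (z' x * p * z x ^ (p - 1) - κ * (1 + δ)) x := by
      intro x hx
      have h1 : HasDerivAt (fun s => z s ^ p) (z' x * p * z x ^ (p - 1)) x :=
        (hzderiv x (hIoo hx)).rpow_const (Or.inl (hzpos x (Set.mem_Icc.2 ⟨hx.1.le, hx.2.le⟩)).ne')
      have h3 := h1.sub ((hasDerivAt_id x).const_mul (κ * (1 + δ)))
      simp only [mul_one] at h3
      exact h3
    apply monotoneOn_of_deriv_nonneg (convex_Icc 0 t)
    · apply ContinuousOn.sub
      · exact ((hzcont.mono hIcc).rpow_const fun x hx => Or.inl (hzpos x hx).ne')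
      · exact (continuous_const.mul continuous_id).continuousOn
    · intro x hx
      rw [interior_Icc] at hx
      exact (hgd x hx).differentiableAt.differentiableWithinAt
    · intro x hx
      rw [interior_Icc] at hx
      rw [(hgd x hx).deriv]
      have hzx := hzpos x ⟨hx.1.le, hx.2.le⟩
      have hkey : κ * (1 + δ) ≤ z' x * p * z x ^ (p - 1) := by
        have h2 : z' x ≤ -κ * z x ^ (2 + δ) := hzineq x (hIoo hx)
        have hpow : (0:ℝ) < z x ^ (p - 1) := Real.rpow_pos_of_pos hzx _
        have h3 : (1 + δ) * (κ * z x ^ (2 + δ)) ≤ z' x * p := by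
          simp only [hp]
          nlinarith [Real.rpow_pos_of_pos hzx (2 + δ)]
        calc κ * (1 + δ) = (1 + δ) * (κ * z x ^ (2 + δ)) * z x ^ (p - 1) := by
              rw [mul_assoc, mul_assoc, ← Real.rpow_add hzx]
              have : 2 + δ + (p - 1) = 0 := by simp [hp]; ring
              rw [this, Real.rpow_zero, mul_one]; ring
          _ ≤ z' x * p * z x ^ (p - 1) := by
              exact mul_le_mul_of_nonneg_right h3 hpow.le
      linarith
  have hkt : 0 < κ * (1 + δ) * t := by positivity
  have hwt : κ * (1 + δ) * t ≤ z t ^ p := by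
    have h0 : g 0 ≤ g t := hgmono ⟨le_rfl, ht0.le⟩ ⟨ht0.le, le_rfl⟩ ht0.le
    have hz0 : 0 < z 0 ^ p := Real.rpow_pos_of_pos (hzpos 0 ⟨le_rfl, ht0.le⟩) _
    simp only [hg] at h0
    linarith
  -- conclude
  have hq : (-(1 + δ)⁻¹ : ℝ) ≤ 0 := neg_nonpos.2 (by positivity)
  have hfinal : z t ≤ (κ * (1 + δ) * t) ^ (-(1 + δ)⁻¹) := by
    have := Real.rpow_le_rpow_of_nonpos hkt hwt hq
    rwa [← Real.rpow_mul hzt.le, hp, show -(1 + δ) * -(1 + δ)⁻¹ = 1 by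
      field_simp, Real.rpow_one] at this
  calc y t = Real.exp (γ * t) * z t := by
        have he : Real.exp (γ * t) * Real.exp (-γ * t) = 1 := by
          rw [← Real.exp_add]; ring_nf; exact Real.exp_zero
        simp only [hzdef]; rw [← mul_assoc, he, one_mul]
    _ ≤ Real.exp (γ * t) * (κ * (1 + δ) * t) ^ (-(1 + δ)⁻¹) :=
        mul_le_mul_of_nonneg_left hfinal (Real.exp_pos _).le
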